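/- arXiv:1611.09927 — 3 statements merged into one kernel-verified Lean document; each statement's English description precedes it below -/
import Mathlib

section
/- If C₁, C₂, C₃ are purely imaginary unit quaternions satisfying C₁C₂C₃ = 1, then there exists a unit quaternion D such that D C₁ D⁻¹ = 𝐢, D C₂ D⁻¹ = 𝐣, and D C₃ D⁻¹ = −𝐤. That is, up to simultaneous conjugation, (𝐢, 𝐣, −𝐤) is the only triple of purely imaginary unit quaternions whose product is 1. -/
open Quaternion

noncomputable def qi : ℍ[ℝ] := ⟨0, 1, 0, 0⟩
noncomputable def qj : ℍ[ℝ] := ⟨0, 0, 1, 0⟩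
noncomputable def qk : ℍ[ℝ] := ⟨0, 0, 0, 1⟩

private lemma normSq_of_unit {q : ℍ[ℝ]} (h : ‖q‖ = 1) : normSq q = 1 := by
  rw [normSq_eq_norm_mul_self, h, mul_one]

private lemma norm_of_normSq_one {q : ℍ[ℝ]} (h : normSq q = 1) : ‖q‖ = 1 := by
  have h2 := normSq_eq_norm_mul_self q
  nlinarith [norm_nonneg q]

private lemma inv_of_unit {q : ℍ[ℝ]} (h : ‖q‖ = 1) : q⁻¹ = star q := by
  rw [Quaternion.inv_def, normSq_of_unit h, inv_one, one_smul]

private lemma pure_unit_sq {q : ℍ[ℝ]} (h : ‖q‖ = 1) (hr : q.re = 0) : q * q = -1 := by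
  have hs : star q = -q := Quaternion.star_eq_neg.2 hr
  have h2 := Quaternion.self_mul_star q
  rw [hs, mul_neg, normSq_of_unit h] at h2
  have h3 : q * q = -((1 : ℝ) : ℍ[ℝ]) := by rw [← h2, neg_neg]
  simpa using h3

private lemma norm_qi : ‖qi‖ = 1 := by
  apply norm_of_normSq_one; rw [Quaternion.normSq_def']; simp [qi]

private lemma norm_qj : ‖qj‖ = 1 := by
  apply norm_of_normSq_one; rw [Quaternion.normSq_def']; simp [qj]

private lemma qi_sq : qi * qi = -1 := pure_unit_sq norm_qi rfl

private lemma qj_sq : qj * qj = -1 := pure_unit_sq norm_qj rfl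

private lemma qi_mul_qj : qi * qj = qk := by
  apply Quaternion.ext <;> simp [Quaternion.re_mul, Quaternion.imI_mul, Quaternion.imJ_mul, Quaternion.imK_mul] <;> simp [qi, qj, qk]

private lemma mul_re_comm (a b : ℍ[ℝ]) : (a * b).re = (b * a).re := by
  simp only [Quaternion.re_mul]; ring

private lemma re_qi_mul (x : ℍ[ℝ]) : (qi * x).re = -x.imI := by
  simp [Quaternion.re_mul]; simp [qi]

private lemma commutes_qi {x : ℍ[ℝ]} (hJ : x.imJ = 0) (hK : x.imK = 0) :
    x * qi = qi * x := by
  apply Quaternion.ext <;>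
    simp [Quaternion.re_mul, Quaternion.imI_mul, Quaternion.imJ_mul,
      Quaternion.imK_mul, hJ, hK] <;> simp [qi]

private lemma normalize_norm {d₀ : ℍ[ℝ]} (hne : d₀ ≠ 0) :
    ‖(‖d₀‖⁻¹ • d₀ : ℍ[ℝ])‖ = 1 := by
  rw [norm_smul, norm_inv, norm_norm, inv_mul_cancel₀ (norm_ne_zero_iff.2 hne)]

private lemma quatConjMul {d : ℍ[ℝ]} (hd : d ≠ 0) (a b : ℍ[ℝ]) :
    (d * a * d⁻¹) * (d * b * d⁻¹) = d * (a * b) * d⁻¹ := by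
  calc (d * a * d⁻¹) * (d * b * d⁻¹) = d * (a * ((d⁻¹ * d) * (b * d⁻¹))) := by
        simp only [mul_assoc]
    _ = d * (a * b) * d⁻¹ := by rw [inv_mul_cancel₀ hd, one_mul]; simp only [mul_assoc]

private lemma conj_comp (d₂ d₁ x : ℍ[ℝ]) :
    (d₂ * d₁) * x * (d₂ * d₁)⁻¹ = d₂ * (d₁ * x * d₁⁻¹) * d₂⁻¹ := by
  rw [mul_inv_rev]; simp only [mul_assoc]

private lemma conj_to_qi {p : ℍ[ℝ]} (hn : ‖p‖ = 1) (hr : p.re = 0) :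
    ∃ d : ℍ[ℝ], ‖d‖ = 1 ∧ d * p = qi * d := by
  by_cases hp : p = -qi
  · refine ⟨qj, norm_qj, ?_⟩
    subst hp
    apply Quaternion.ext <;> simp [Quaternion.re_mul, Quaternion.imI_mul, Quaternion.imJ_mul, Quaternion.imK_mul] <;> simp [qi, qj]
  · set d₀ : ℍ[ℝ] := 1 - qi * p with hd0
    have hpp : p * p = -1 := pure_unit_sq hn hr
    have hne : d₀ ≠ 0 := by
      intro h
      apply hp
      have h1 : qi * p = 1 := by rwa [hd0, sub_eq_zero, eq_comm] at h
      have h2 := congrArg (fun x => qi * x) h1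
      simp only [← mul_assoc, qi_sq, neg_one_mul, mul_one] at h2
      exact neg_eq_iff_eq_neg.mp h2
    have hkey : d₀ * p = qi * d₀ := by
      have ha : d₀ * p = p + qi := by
        rw [hd0, sub_mul, one_mul, mul_assoc, hpp, mul_neg_one, sub_neg_eq_add]
      have hb : qi * d₀ = qi + p := by
        rw [hd0, mul_sub, mul_one, ← mul_assoc, qi_sq, neg_one_mul, sub_neg_eq_add]
      rw [ha, hb, add_comm]
    exact ⟨‖d₀‖⁻¹ • d₀, normalize_norm hne, by
      rw [smul_mul_assoc, mul_smul_comm, hkey]⟩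

private lemma conj_to_qj {p : ℍ[ℝ]} (hn : ‖p‖ = 1) (hr : p.re = 0) (hI : p.imI = 0) :
    ∃ d : ℍ[ℝ], ‖d‖ = 1 ∧ d * p = qj * d ∧ d * qi = qi * d := by
  by_cases hp : p = -qj
  · refine ⟨qi, norm_qi, ?_, rfl⟩
    subst hp
    apply Quaternion.ext <;> simp [Quaternion.re_mul, Quaternion.imI_mul, Quaternion.imJ_mul, Quaternion.imK_mul] <;> simp [qi, qj]
  · set d₀ : ℍ[ℝ] := 1 - qj * p with hd0
    have hpp : p * p = -1 := pure_unit_sq hn hr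
    have hne : d₀ ≠ 0 := by
      intro h
      apply hp
      have h1 : qj * p = 1 := by rwa [hd0, sub_eq_zero, eq_comm] at h
      have h2 := congrArg (fun x => qj * x) h1
      simp only [← mul_assoc, qj_sq, neg_one_mul, mul_one] at h2
      exact neg_eq_iff_eq_neg.mp h2
    have hkey : d₀ * p = qj * d₀ := by
      have ha : d₀ * p = p + qj := by
        rw [hd0, sub_mul, one_mul, mul_assoc, hpp, mul_neg_one, sub_neg_eq_add]
      have hb : qj * d₀ = qj + p := by
        rw [hd0, mul_sub, mul_one, ← mul_assoc, qj_sq, neg_one_mul, sub_neg_eq_add]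
      rw [ha, hb, add_comm]
    have hJ : d₀.imJ = 0 := by
      rw [hd0]
      simp [Quaternion.imJ_mul, hr, hI]; simp [qj]
    have hK : d₀.imK = 0 := by
      rw [hd0]
      simp [Quaternion.imK_mul, hr, hI]; simp [qj]
    refine ⟨‖d₀‖⁻¹ • d₀, normalize_norm hne,
      by rw [smul_mul_assoc, mul_smul_comm, hkey], ?_⟩
    rw [smul_mul_assoc, mul_smul_comm, commutes_qi hJ hK]

/-- If `C₁, C₂, C₃` are purely imaginary unit quaternions with `C₁C₂C₃ = 1`, then the triple
`(C₁, C₂, C₃)` is simultaneously conjugate to `(𝐢, 𝐣, −𝐤)` by a unit quaternion. -/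
theorem traceless_triple_conjugate_to_ijk (C₁ C₂ C₃ : ℍ[ℝ])
    (h₁ : ‖C₁‖ = 1) (h₂ : ‖C₂‖ = 1) (h₃ : ‖C₃‖ = 1)
    (hi₁ : C₁.re = 0) (hi₂ : C₂.re = 0) (hi₃ : C₃.re = 0)
    (hprod : C₁ * C₂ * C₃ = 1) :
    ∃ D : ℍ[ℝ], ‖D‖ = 1 ∧
      D * C₁ * D⁻¹ = qi ∧ D * C₂ * D⁻¹ = qj ∧ D * C₃ * D⁻¹ = -qk := by
  have hP : ‖C₁ * C₂‖ = 1 := by rw [norm_mul, h₁, h₂, mul_one]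
  have hC₃ : C₃ = star (C₁ * C₂) := by
    rw [← inv_of_unit hP]
    exact eq_inv_of_mul_eq_one_right hprod
  have hrP : (C₁ * C₂).re = 0 := by
    rw [← Quaternion.re_star, ← hC₃]; exact hi₃
  have hC₃' : C₃ = -(C₁ * C₂) := by
    rw [hC₃, Quaternion.star_eq_neg.2 hrP]
  obtain ⟨d₁, hd₁n, hd₁⟩ := conj_to_qi h₁ hi₁
  have hd₁ne : d₁ ≠ 0 := by
    intro h; rw [h, norm_zero] at hd₁n; norm_num at hd₁n
  have hconj1 : d₁ * C₁ * d₁⁻¹ = qi := by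
    rw [hd₁, mul_assoc, mul_inv_cancel₀ hd₁ne, mul_one]
  have hp'n : ‖d₁ * C₂ * d₁⁻¹‖ = 1 := by
    rw [norm_mul, norm_mul, norm_inv, hd₁n, h₂]; norm_num
  have hp're : (d₁ * C₂ * d₁⁻¹).re = 0 := by
    rw [mul_re_comm, ← mul_assoc, inv_mul_cancel₀ hd₁ne, one_mul, hi₂]
  have hp'I : (d₁ * C₂ * d₁⁻¹).imI = 0 := by
    have h5 : (qi * (d₁ * C₂ * d₁⁻¹)).re = 0 := by
      rw [← hconj1, quatConjMul hd₁ne, mul_re_comm, ← mul_assoc,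
        inv_mul_cancel₀ hd₁ne, one_mul, hrP]
    have h6 := re_qi_mul (d₁ * C₂ * d₁⁻¹)
    rw [h5] at h6
    linarith
  obtain ⟨d₂, hd₂n, hd₂p, hd₂i⟩ := conj_to_qj hp'n hp're hp'I
  have hd₂ne : d₂ ≠ 0 := by
    intro h; rw [h, norm_zero] at hd₂n; norm_num at hd₂n
  have hDne : d₂ * d₁ ≠ 0 := mul_ne_zero hd₂ne hd₁ne
  have hc1 : (d₂ * d₁) * C₁ * (d₂ * d₁)⁻¹ = qi := by
    rw [conj_comp, hconj1, hd₂i, mul_assoc, mul_inv_cancel₀ hd₂ne, mul_one]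
  have hc2 : (d₂ * d₁) * C₂ * (d₂ * d₁)⁻¹ = qj := by
    rw [conj_comp, hd₂p, mul_assoc, mul_inv_cancel₀ hd₂ne, mul_one]
  refine ⟨d₂ * d₁, by rw [norm_mul, hd₂n, hd₁n, mul_one], hc1, hc2, ?_⟩
  rw [hC₃', mul_neg, neg_mul, ← quatConjMul hDne, hc1, hc2, qi_mul_qj]
end

section
/- The set T = {(C₁, C₂, C₃) : each Cᵢ is a purely imaginary unit quaternion and C₁C₂C₃ = 1} is nonempty (it contains (𝐢, 𝐣, −𝐤)), and the group of unit quaternions acts transitively on T by simultaneous conjugation. Equivalently, the quotient of T by simultaneous conjugation — the traceless character variety 𝓜₀,₃ of the three-punctured sphere — consists of a single point. -/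
open Quaternion

/-- The set of triples of purely imaginary unit quaternions with product `1`. -/
def Tset : Set (ℍ[ℝ] × ℍ[ℝ] × ℍ[ℝ]) :=
  {C | (‖C.1‖ = 1 ∧ C.1.re = 0) ∧ (‖C.2.1‖ = 1 ∧ C.2.1.re = 0) ∧
    (‖C.2.2‖ = 1 ∧ C.2.2.re = 0) ∧ C.1 * C.2.1 * C.2.2 = 1}

@[simp] lemma qi_re : qi.re = 0 := rfl
@[simp] lemma qi_imI : qi.imI = 1 := rfl
@[simp] lemma qi_imJ : qi.imJ = 0 := rfl
@[simp] lemma qi_imK : qi.imK = 0 := rfl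
@[simp] lemma qj_re : qj.re = 0 := rfl
@[simp] lemma qj_imI : qj.imI = 0 := rfl
@[simp] lemma qj_imJ : qj.imJ = 1 := rfl
@[simp] lemma qj_imK : qj.imK = 0 := rfl
@[simp] lemma qk_re : qk.re = 0 := rfl
@[simp] lemma qk_imI : qk.imI = 0 := rfl
@[simp] lemma qk_imJ : qk.imJ = 0 := rfl
@[simp] lemma qk_imK : qk.imK = 1 := rfl

section Aux

lemma aux_normSq_one {a : ℍ[ℝ]} (h : ‖a‖ = 1) : Quaternion.normSq a = 1 := by
  rw [Quaternion.normSq_eq_norm_mul_self, h]; norm_num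

lemma aux_sq_neg_one {u : ℍ[ℝ]} (h1 : ‖u‖ = 1) (h0 : u.re = 0) : u * u = -1 := by
  have hn := aux_normSq_one h1
  rw [Quaternion.normSq_def'] at hn
  ext <;>
    simp only [Quaternion.re_mul, Quaternion.imI_mul, Quaternion.imJ_mul, Quaternion.imK_mul,
      Quaternion.re_neg, Quaternion.imI_neg, Quaternion.imJ_neg, Quaternion.imK_neg,
      Quaternion.re_one, Quaternion.imI_one, Quaternion.imJ_one, Quaternion.imK_one, h0] <;>
    nlinarith [hn]

lemma aux_re_mul_comm (u v : ℍ[ℝ]) : (u * v).re = (v * u).re := by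
  simp only [Quaternion.re_mul]; ring

lemma aux_anticomm {u v : ℍ[ℝ]} (hu : u.re = 0) (hv : v.re = 0) (h : (u * v).re = 0) :
    v * u = -(u * v) := by
  have h' := h
  simp only [Quaternion.re_mul, hu, hv] at h'
  ext <;>
    simp only [Quaternion.re_mul, Quaternion.imI_mul, Quaternion.imJ_mul, Quaternion.imK_mul,
      Quaternion.re_neg, Quaternion.imI_neg, Quaternion.imJ_neg, Quaternion.imK_neg,
      hu, hv] <;>
    nlinarith [h']

lemma aux_psi_i (u v x : ℍ[ℝ]) :
    u * (x - u*x*qi - v*x*qj - u*v*x*qk) - (x - u*x*qi - v*x*qj - u*v*x*qk) * qi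
      = -(u*u + 1)*(x*qi + v*x*qk) := by
  ext <;> simp [Quaternion.re_mul, Quaternion.imI_mul, Quaternion.imJ_mul,
    Quaternion.imK_mul] <;> ring

lemma aux_psi_j (u v x : ℍ[ℝ]) :
    v * (x - u*x*qi - v*x*qj - u*v*x*qk) - (x - u*x*qi - v*x*qj - u*v*x*qk) * qj
      = -((v*v + 1)*(x*qj)) - (v*u + u*v)*x*qi + (u - (v*u)*v)*(x*qk) := by
  ext <;> simp [Quaternion.re_mul, Quaternion.imI_mul, Quaternion.imJ_mul,
    Quaternion.imK_mul] <;> ring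

lemma aux_re4 : QuaternionAlgebra.re (4:ℍ[ℝ]) = 4 := rfl
lemma aux_imI4 : QuaternionAlgebra.imI (4:ℍ[ℝ]) = 0 := rfl
lemma aux_imJ4 : QuaternionAlgebra.imJ (4:ℍ[ℝ]) = 0 := rfl
lemma aux_imK4 : QuaternionAlgebra.imK (4:ℍ[ℝ]) = 0 := rfl

lemma aux_four (u v : ℍ[ℝ]) :
    (1 - u*1*qi - v*1*qj - u*v*1*qk)
    - (qi - u*qi*qi - v*qi*qj - u*v*qi*qk) * qi
    - (qj - u*qj*qi - v*qj*qj - u*v*qj*qk) * qj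
    - (qk - u*qk*qi - v*qk*qj - u*v*qk*qk) * qk = 4 := by
  ext <;> simp [Quaternion.re_mul, Quaternion.imI_mul, Quaternion.imJ_mul,
    Quaternion.imK_mul, aux_re4, aux_imI4, aux_imJ4, aux_imK4] <;> ring

lemma aux_four_ne : (4 : ℍ[ℝ]) ≠ 0 := by
  intro h
  have := congrArg QuaternionAlgebra.re h
  rw [aux_re4] at this
  norm_num at this

/-- Key step: any orthonormal pair of purely imaginary unit quaternions is
simultaneously conjugate to `(qi, qj)`. -/
lemma aux_exists_conj (u v : ℍ[ℝ]) (hu1 : ‖u‖ = 1) (hu0 : u.re = 0)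
    (hv1 : ‖v‖ = 1) (hv0 : v.re = 0) (huv : (u * v).re = 0) :
    ∃ D : ℍ[ℝ], ‖D‖ = 1 ∧ u * D = D * qi ∧ v * D = D * qj := by
  have hu2 : u * u = -1 := aux_sq_neg_one hu1 hu0
  have hv2 : v * v = -1 := aux_sq_neg_one hv1 hv0
  have hvu : v * u = -(u * v) := aux_anticomm hu0 hv0 huv
  have keyi : ∀ x : ℍ[ℝ], u * (x - u*x*qi - v*x*qj - u*v*x*qk)
      = (x - u*x*qi - v*x*qj - u*v*x*qk) * qi := by
    intro x
    have h := aux_psi_i u v x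
    rw [hu2] at h
    norm_num at h
    first
      | exact h
      | exact sub_eq_zero.mp h
  have keyj : ∀ x : ℍ[ℝ], v * (x - u*x*qi - v*x*qj - u*v*x*qk)
      = (x - u*x*qi - v*x*qj - u*v*x*qk) * qj := by
    intro x
    have h := aux_psi_j u v x
    have hvuv : v * u * v = u := by
      rw [hvu, neg_mul, mul_assoc, hv2, mul_neg_one, neg_neg]
    rw [hvuv, hvu, hv2] at h
    norm_num at h
    first
      | exact h
      | exact sub_eq_zero.mp h
  obtain ⟨D0, hD0ne, hD0i, hD0j⟩ :
      ∃ D0 : ℍ[ℝ], D0 ≠ 0 ∧ u * D0 = D0 * qi ∧ v * D0 = D0 * qj := by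
    by_cases h1 : (1 - u*1*qi - v*1*qj - u*v*1*qk) ≠ 0
    · exact ⟨_, h1, keyi 1, keyj 1⟩
    · by_cases h2 : (qi - u*qi*qi - v*qi*qj - u*v*qi*qk) ≠ 0
      · exact ⟨_, h2, keyi qi, keyj qi⟩
      · by_cases h3 : (qj - u*qj*qi - v*qj*qj - u*v*qj*qk) ≠ 0
        · exact ⟨_, h3, keyi qj, keyj qj⟩
        · by_cases h4 : (qk - u*qk*qi - v*qk*qj - u*v*qk*qk) ≠ 0
          · exact ⟨_, h4, keyi qk, keyj qk⟩
          · exfalso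
            push_neg at h1 h2 h3 h4
            have h := aux_four u v
            rw [h1, h2, h3, h4] at h
            simp at h
            exact aux_four_ne h.symm
  have hn : ‖D0‖ ≠ 0 := norm_ne_zero_iff.mpr hD0ne
  refine ⟨(‖D0‖⁻¹ : ℝ) • D0, ?_, ?_, ?_⟩
  · rw [norm_smul]
    simp [abs_of_nonneg (norm_nonneg D0), inv_mul_cancel₀ hn]
  · rw [mul_smul_comm, hD0i, smul_mul_assoc]
  · rw [mul_smul_comm, hD0j, smul_mul_assoc]

/-- Every element of `Tset` is conjugate to the base point `(qi, qj, -qk)`. -/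
lemma aux_conj_base (C : ℍ[ℝ] × ℍ[ℝ] × ℍ[ℝ]) (hC : C ∈ Tset) :
    ∃ D : ℍ[ℝ], D ≠ 0 ∧ ‖D‖ = 1 ∧
      D * qi * D⁻¹ = C.1 ∧ D * qj * D⁻¹ = C.2.1 ∧ D * (-qk) * D⁻¹ = C.2.2 := by
  obtain ⟨⟨hu1, hu0⟩, ⟨hv1, hv0⟩, ⟨hw1, hw0⟩, hprod⟩ := hC
  set u := C.1
  set v := C.2.1
  set w := C.2.2
  have hu2 : u * u = -1 := aux_sq_neg_one hu1 hu0
  have hv2 : v * v = -1 := aux_sq_neg_one hv1 hv0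
  have huinv : u⁻¹ = -u := by
    have : u * (-u) = 1 := by rw [mul_neg, hu2]; norm_num
    exact inv_eq_of_mul_eq_one_right this
  have hvinv : v⁻¹ = -v := by
    have : v * (-v) = 1 := by rw [mul_neg, hv2]; norm_num
    exact inv_eq_of_mul_eq_one_right this
  have hw : w = v * u := by
    have h1 : w = (u * v)⁻¹ := eq_inv_of_mul_eq_one_right hprod
    rw [h1, mul_inv_rev, huinv, hvinv, neg_mul_neg]
  have huv : (u * v).re = 0 := by
    rw [aux_re_mul_comm, ← hw]; exact hw0
  obtain ⟨D, hD1, hDi, hDj⟩ := aux_exists_conj u v hu1 hu0 hv1 hv0 huv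
  have hDne : D ≠ 0 := by
    intro h; rw [h] at hD1; simp at hD1
  have hqjqi : qj * qi = -qk := by
    ext <;> simp [Quaternion.re_mul, Quaternion.imI_mul, Quaternion.imJ_mul,
      Quaternion.imK_mul]
  have hDk : w * D = D * (-qk) := by
    rw [hw, mul_assoc, hDi, ← mul_assoc, hDj, mul_assoc, hqjqi]
  refine ⟨D, hDne, hD1, ?_, ?_, ?_⟩
  · rw [← hDi, mul_assoc, mul_inv_cancel₀ hDne, mul_one]
  · rw [← hDj, mul_assoc, mul_inv_cancel₀ hDne, mul_one]
  · rw [← hDk, mul_assoc, mul_inv_cancel₀ hDne, mul_one]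

lemma aux_conj_comp {D D' a c c' : ℍ[ℝ]} (hD : D ≠ 0)
    (h : D * a * D⁻¹ = c) (h' : D' * a * D'⁻¹ = c') :
    (D' * D⁻¹) * c * (D' * D⁻¹)⁻¹ = c' := by
  rw [← h, ← h', mul_inv_rev, inv_inv]
  simp [mul_assoc, inv_mul_cancel_left₀ hD]

end Aux

/-- `T` is nonempty (it contains `(𝐢, 𝐣, −𝐤)`) and the unit quaternions act transitively on it
by simultaneous conjugation; hence the traceless character variety `𝓜₀,₃` is a single point. -/
theorem traceless_character_variety_of_sphere_is_point :
    (qi, qj, -qk) ∈ Tset ∧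
      ∀ C ∈ Tset, ∀ C' ∈ Tset, ∃ D : ℍ[ℝ], ‖D‖ = 1 ∧
        D * C.1 * D⁻¹ = C'.1 ∧ D * C.2.1 * D⁻¹ = C'.2.1 ∧ D * C.2.2 * D⁻¹ = C'.2.2 := by
  constructor
  · refine ⟨⟨?_, rfl⟩, ⟨?_, rfl⟩, ⟨?_, ?_⟩, ?_⟩
    · have h : ‖qi‖ * ‖qi‖ = 1 := by
        rw [← Quaternion.normSq_eq_norm_mul_self]
        simp [Quaternion.normSq_def']
      rcases mul_self_eq_one_iff.mp h with h1 | h1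
      · exact h1
      · nlinarith [norm_nonneg qi]
    · have h : ‖qj‖ * ‖qj‖ = 1 := by
        rw [← Quaternion.normSq_eq_norm_mul_self]
        simp [Quaternion.normSq_def']
      rcases mul_self_eq_one_iff.mp h with h1 | h1
      · exact h1
      · nlinarith [norm_nonneg qj]
    · have h : ‖(-qk)‖ * ‖(-qk)‖ = 1 := by
        rw [← Quaternion.normSq_eq_norm_mul_self]
        simp [Quaternion.normSq_def']
      rcases mul_self_eq_one_iff.mp h with h1 | h1
      · exact h1
      · nlinarith [norm_nonneg (-qk)]
    · show (-qk).re = 0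
      simp
    · show qi * qj * (-qk) = 1
      ext <;> simp [Quaternion.re_mul, Quaternion.imI_mul, Quaternion.imJ_mul,
        Quaternion.imK_mul]
  · intro C hC C' hC'
    obtain ⟨D, hDne, hD1, hDi, hDj, hDk⟩ := aux_conj_base C hC
    obtain ⟨D', hDne', hD1', hDi', hDj', hDk'⟩ := aux_conj_base C' hC'
    refine ⟨D' * D⁻¹, ?_, ?_, ?_, ?_⟩
    · rw [norm_mul, norm_inv, hD1, hD1']; norm_num
    · exact aux_conj_comp hDne hDi hDi'
    · exact aux_conj_comp hDne hDj hDj'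
    · exact aux_conj_comp hDne hDk hDk'
end

section
/- Let r ≥ 2 and let (C₁, …, C_{r+1}) ∈ R. If M ∈ SU(r) commutes with every Cⱼ (j = 1, …, r+1), then M is a scalar matrix, i.e., M = c·I for some complex number c with c^r = 1. In other words, the stabilizer of any point of R under the simultaneous conjugation action of SU(r) is the center of SU(r). -/
open Matrix


private lemma aux_mulVec_ext {r : ℕ} {A B : Matrix (Fin r) (Fin r) ℂ}
    (h : ∀ x, A *ᵥ x = B *ᵥ x) : A = B := by
  ext i j
  have := congrFun (h (Pi.single j 1)) i
  simpa [Matrix.mulVec_single] using this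

private lemma aux_vecMulVec_mulVec {r : ℕ} (w v x : Fin r → ℂ) :
    vecMulVec w v *ᵥ x = (v ⬝ᵥ x) • w := by
  funext i
  simp only [Matrix.mulVec, dotProduct, vecMulVec_apply, Pi.smul_apply, smul_eq_mul,
    Finset.sum_mul]
  exact Finset.sum_congr rfl fun j _ => by ring

private lemma aux_prod_fixes {r : ℕ} (x : Fin r → ℂ) :
    ∀ l : List (Matrix (Fin r) (Fin r) ℂ), (∀ A ∈ l, A *ᵥ x = x) → l.prod *ᵥ x = x := by
  intro l
  induction l with
  | nil => intro _; simp [Matrix.one_mulVec]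
  | cons a l ih =>
    intro h
    rw [List.prod_cons, ← Matrix.mulVec_mulVec, ih (fun A hA => h A (List.mem_cons_of_mem _ hA)),
      h a (List.mem_cons_self)]

private lemma aux_listvec {r : ℕ} (A : Matrix (Fin r) (Fin r) ℂ) (x : Fin r → ℂ) (lam : ℂ)
    (h : A *ᵥ x = lam • x) :
    ∀ l : List (ℂ × ℂ),
      ((l.map fun p => p.1 • (A - p.2 • (1 : Matrix (Fin r) (Fin r) ℂ))).prod) *ᵥ x
        = ((l.map fun p => p.1 * (lam - p.2)).prod) • x := by
  intro l
  induction l with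
  | nil => simp [Matrix.one_mulVec]
  | cons p l ih =>
    simp only [List.map_cons, List.prod_cons, ← Matrix.mulVec_mulVec, ih]
    rw [Matrix.mulVec_smul, Matrix.smul_mulVec, Matrix.sub_mulVec,
      Matrix.smul_mulVec, Matrix.one_mulVec, h]
    rw [smul_sub, smul_smul, smul_smul, ← sub_smul, smul_smul]
    congr 1
    ring

private lemma aux_prod_commute {r : ℕ} (T : Matrix (Fin r) (Fin r) ℂ) :
    ∀ l : List (Matrix (Fin r) (Fin r) ℂ), (∀ A ∈ l, A * T = T * A) → l.prod * T = T * l.prod := by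
  intro l
  induction l with
  | nil => simp
  | cons a l ih =>
    intro h
    rw [List.prod_cons, mul_assoc, ih (fun A hA => h A (List.mem_cons_of_mem _ hA)), ← mul_assoc,
      h a (List.mem_cons_self), mul_assoc]

private lemma aux_prod_sq_one :
    ∀ l : List ℂ, (∀ z ∈ l, z ^ 2 = 1) → l.prod ^ 2 = 1 := by
  intro l
  induction l with
  | nil => simp
  | cons a l ih =>
    intro h
    rw [List.prod_cons, mul_pow, h a (List.mem_cons_self),
      ih (fun z hz => h z (List.mem_cons_of_mem _ hz)), one_mul]

private lemma aux_smul_list_prod {r : ℕ} (a : ℂ) :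
    ∀ l : List (Matrix (Fin r) (Fin r) ℂ),
      (l.map fun A => a • A).prod = a ^ l.length • l.prod := by
  intro l
  induction l with
  | nil => simp
  | cons b l ih =>
    simp only [List.map_cons, List.prod_cons, ih, List.length_cons]
    rw [smul_mul_assoc, mul_smul_comm, smul_smul, pow_succ, mul_comm]


private lemma aux_core {r : ℕ} (hr : 2 ≤ r) (M : Matrix (Fin r) (Fin r) ℂ)
    (hMU : Mᴴ * M = 1) (hMdet : M.det = 1) (s : ℂ)
    (hs : s = Complex.exp (((r : ℂ) + 1) * ((Real.pi : ℂ) / (r : ℂ)) * Complex.I))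
    (w : Fin (r+1) → Fin r → ℂ)
    (hnorm : ∀ j, star (w j) ⬝ᵥ w j = 1)
    (hMP : ∀ j, M * vecMulVec (w j) (star (w j)) = vecMulVec (w j) (star (w j)) * M)
    (hprodQ : (List.ofFn fun j => (1 : Matrix (Fin r) (Fin r) ℂ)
        - (2:ℂ) • vecMulVec (w j) (star (w j))).prod = s • 1) :
    ∃ c : ℂ, c ^ r = 1 ∧ M = c • (1 : Matrix (Fin r) (Fin r) ℂ) := by
  set P : Fin (r+1) → Matrix (Fin r) (Fin r) ℂ := fun j => vecMulVec (w j) (star (w j))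
    with hPdef
  set Q : Fin (r+1) → Matrix (Fin r) (Fin r) ℂ := fun j => 1 - (2:ℂ) • P j with hQdef
  -- basic facts about P
  have hPvec : ∀ j x, P j *ᵥ x = (star (w j) ⬝ᵥ x) • w j := fun j x =>
    aux_vecMulVec_mulVec _ _ _
  have hPw : ∀ j, P j *ᵥ w j = w j := by
    intro j; rw [hPvec, hnorm, one_smul]
  have hP2 : ∀ j, P j * P j = P j := by
    intro j
    apply aux_mulVec_ext
    intro x
    rw [← Matrix.mulVec_mulVec, hPvec j x, Matrix.mulVec_smul, hPw j]
  have hPH : ∀ j, (P j)ᴴ = P j := by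
    intro j
    ext a b
    simp [hPdef, Matrix.conjTranspose_apply, Matrix.vecMulVec_apply, mul_comm]
  -- eigenvalues
  set μ : Fin (r+1) → ℂ := fun j => star (w j) ⬝ᵥ (M *ᵥ w j) with hμdef
  have hMw : ∀ j, M *ᵥ w j = μ j • w j := by
    intro j
    conv_lhs => rw [← hPw j, Matrix.mulVec_mulVec, hMP j, ← Matrix.mulVec_mulVec, hPvec]
  have hμunit : ∀ j, (starRingEnd ℂ) (μ j) * μ j = 1 := by
    intro j
    have h1 : star (M *ᵥ w j) ⬝ᵥ (M *ᵥ w j) = 1 := by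
      rw [Matrix.star_mulVec, Matrix.dotProduct_mulVec, Matrix.vecMul_vecMul, hMU,
        Matrix.vecMul_one, hnorm]
    rw [hMw j] at h1
    rw [star_smul, smul_dotProduct, dotProduct_smul, hnorm] at h1
    simpa [smul_eq_mul, mul_assoc] using h1
  have hμne : ∀ j, μ j ≠ 0 := by
    intro j hj
    have := hμunit j
    rw [hj, mul_zero] at this
    exact zero_ne_one this
  have hMHw : ∀ j, Mᴴ *ᵥ w j = (starRingEnd ℂ) (μ j) • w j := by
    intro j
    have h1 : Mᴴ *ᵥ (M *ᵥ w j) = w j := by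
      rw [Matrix.mulVec_mulVec, hMU, Matrix.one_mulVec]
    rw [hMw j, Matrix.mulVec_smul] at h1
    have h2 : Mᴴ *ᵥ w j = (μ j)⁻¹ • w j := by
      rw [← inv_smul_smul₀ (hμne j) (Mᴴ *ᵥ w j), h1]
    rw [h2, eq_inv_of_mul_eq_one_left (hμunit j)]
  -- spanning
  have hπ0 : (Real.pi : ℂ) ≠ 0 := Complex.ofReal_ne_zero.mpr Real.pi_ne_zero
  have hrC0 : (r : ℂ) ≠ 0 := Nat.cast_ne_zero.mpr (by omega)
  have hπI0 : (Real.pi : ℂ) * Complex.I ≠ 0 := mul_ne_zero hπ0 Complex.I_ne_zero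
  have hsne1 : s ≠ 1 := by
    rw [hs]
    intro h
    obtain ⟨n, hn⟩ := Complex.exp_eq_one_iff.mp h
    have h2 : ((r:ℂ) + 1) * ((Real.pi:ℂ) * Complex.I) = (2*n*r) * ((Real.pi:ℂ) * Complex.I) := by
      field_simp at hn
      linear_combination ((Real.pi:ℂ) * Complex.I) * hn
    have h3 : ((r:ℂ) + 1) = 2*n*r := mul_right_cancel₀ hπI0 h2
    have h4 : ((r:ℤ) + 1) = 2*n*r := by exact_mod_cast h3
    have h5 : (r:ℤ) ∣ 1 := ⟨2*n - 1, by linarith⟩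
    have h6 := Int.le_of_dvd one_pos h5
    omega
  have hspan : ∀ x : Fin r → ℂ, (∀ j, star (w j) ⬝ᵥ x = 0) → x = 0 := by
    intro x hx
    have hQx : ∀ j, Q j *ᵥ x = x := by
      intro j
      rw [hQdef]
      simp only [Matrix.sub_mulVec, Matrix.smul_mulVec, Matrix.one_mulVec, hPvec, hx j,
        zero_smul, smul_zero, sub_zero]
    have h1 : (List.ofFn Q).prod *ᵥ x = x := by
      apply aux_prod_fixes
      intro A hA
      obtain ⟨j, rfl⟩ := List.mem_ofFn.mp hA
      exact hQx j
    rw [hprodQ, Matrix.smul_mulVec, Matrix.one_mulVec] at h1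
    have h2 : (s - 1) • x = 0 := by rw [sub_smul, one_smul, h1, sub_self]
    rcases smul_eq_zero.mp h2 with h | h
    · exact absurd (sub_eq_zero.mp h) hsne1
    · exact h
  have hkill : ∀ N : Matrix (Fin r) (Fin r) ℂ, (∀ j, N *ᵥ w j = 0) → N = 0 := by
    intro N hN
    have h1 : Nᴴ = 0 := by
      apply aux_mulVec_ext (B := 0)
      intro y
      rw [Matrix.zero_mulVec]
      apply hspan
      intro j
      rw [Matrix.dotProduct_mulVec, ← Matrix.star_mulVec, hN j]
      simp
    simpa using congrArg Matrix.conjTranspose h1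
    -- s facts
  have hπ : (Real.pi : ℂ) ≠ 0 := Complex.ofReal_ne_zero.mpr Real.pi_ne_zero
  have hrC : (r : ℂ) ≠ 0 := Nat.cast_ne_zero.mpr (by omega)
  have hπI : (Real.pi : ℂ) * Complex.I ≠ 0 := mul_ne_zero hπ Complex.I_ne_zero
  have hdvd : ∀ d : ℕ, s ^ (2*d) = 1 → r ∣ d := by
    intro d hd
    rw [hs, ← Complex.exp_nat_mul] at hd
    obtain ⟨n, hn⟩ := Complex.exp_eq_one_iff.mp hd
    have h2 : ((2*d:ℕ):ℂ) * (((r:ℂ)+1)) * ((Real.pi:ℂ) * Complex.I)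
        = (2*n*r) * ((Real.pi:ℂ) * Complex.I) := by
      field_simp at hn
      push_cast at hn ⊢
      linear_combination ((Real.pi:ℂ) * Complex.I) * hn
    have h3 : ((2*d:ℕ):ℂ) * ((r:ℂ)+1) = 2*n*r := mul_right_cancel₀ hπI h2
    have h4 : (2*d:ℤ) * ((r:ℤ)+1) = 2*n*r := by exact_mod_cast h3
    have h5 : (d:ℤ) * ((r:ℤ)+1) = n*r := by linarith
    have h6 : (r:ℤ) ∣ (d:ℤ) := ⟨n - d, by linarith⟩
    exact_mod_cast h6
  -- the spectral projection T
  set μ0 : ℂ := μ 0 with hμ0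
  set lv : List ℂ := ((Finset.univ.image μ).erase μ0).toList with hlv
  set lp : List (ℂ × ℂ) := lv.map fun v => ((μ0 - v)⁻¹, v) with hlp
  set T : Matrix (Fin r) (Fin r) ℂ := ((lp.map fun p => p.1 • (M - p.2 • 1)).prod) with hT
  set c : Fin (r+1) → ℂ := fun j => (lp.map fun p => p.1 * (μ j - p.2)).prod with hc
  have hTw : ∀ j, T *ᵥ w j = c j • w j := fun j => aux_listvec M (w j) (μ j) (hMw j) lp
  have hceq : ∀ j, μ j = μ0 → c j = 1 := by
    intro j hj
    show (List.map (fun p => p.1 * (μ j - p.2)) lp).prod = 1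
    rw [hlp, List.map_map]
    apply List.prod_eq_one
    intro z hz
    obtain ⟨v, hv, rfl⟩ := List.mem_map.mp hz
    have hvne : v ≠ μ0 := Finset.ne_of_mem_erase (Finset.mem_toList.mp (by rwa [hlv] at hv))
    simp only [Function.comp_apply, hj]
    exact inv_mul_cancel₀ (sub_ne_zero.mpr (Ne.symm hvne))
  have hcne : ∀ j, μ j ≠ μ0 → c j = 0 := by
    intro j hj
    show (List.map (fun p => p.1 * (μ j - p.2)) lp).prod = 0
    apply List.prod_eq_zero
    have hmem : μ j ∈ lv := Finset.mem_toList.mpr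
      (Finset.mem_erase.mpr ⟨hj, Finset.mem_image_of_mem μ (Finset.mem_univ j)⟩)
    have hmem2 : ((μ0 - μ j)⁻¹, μ j) ∈ lp := by
      rw [hlp]; exact List.mem_map_of_mem hmem
    exact List.mem_map.mpr ⟨_, hmem2, by simp⟩
  have hc01 : ∀ j, c j = 0 ∨ c j = 1 := by
    intro j
    by_cases h : μ j = μ0
    · exact Or.inr (hceq j h)
    · exact Or.inl (hcne j h)
  have hc0 : c 0 = 1 := hceq 0 rfl
  have hwne : ∀ j, w j ≠ 0 := by
    intro j h
    have h1 := hnorm j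
    rw [h] at h1
    simp only [dotProduct_zero] at h1
    exact zero_ne_one h1
  have hT2 : T * T = T := by
    apply sub_eq_zero.mp
    apply hkill
    intro j
    rw [Matrix.sub_mulVec, ← Matrix.mulVec_mulVec, hTw, Matrix.mulVec_smul, hTw, smul_smul]
    rcases hc01 j with h | h <;> rw [h] <;> simp
  have hTHw : ∀ j, Tᴴ *ᵥ w j = (starRingEnd ℂ) (c j) • w j := by
    intro j
    have e1 : Tᴴ = ((lp.reverse.map fun p => ((starRingEnd ℂ) p.1, (starRingEnd ℂ) p.2)).map
        fun p => p.1 • (Mᴴ - p.2 • (1 : Matrix (Fin r) (Fin r) ℂ))).prod := by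
      rw [hT, Matrix.conjTranspose_list_prod]
      congr 1
      simp only [hlp, List.map_map, ← List.map_reverse]
      apply List.map_congr_left
      intro v _
      simp only [Function.comp_apply]
      rw [Matrix.conjTranspose_smul, Matrix.conjTranspose_sub, Matrix.conjTranspose_smul,
        Matrix.conjTranspose_one]
      rfl
    rw [e1, aux_listvec Mᴴ (w j) _ (hMHw j)]
    congr 1
    show _ = (starRingEnd ℂ) ((List.map (fun p => p.1 * (μ j - p.2)) lp).prod)
    rw [List.map_map]
    have e2 : ((fun p : ℂ × ℂ => p.1 * ((starRingEnd ℂ) (μ j) - p.2)) ∘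
        fun p : ℂ × ℂ => ((starRingEnd ℂ) p.1, (starRingEnd ℂ) p.2))
        = (starRingEnd ℂ) ∘ fun p : ℂ × ℂ => p.1 * (μ j - p.2) := by
      funext p
      simp only [Function.comp_apply, _root_.map_mul, _root_.map_sub]
    rw [e2, ← List.map_map, ← map_list_prod (starRingEnd ℂ)]
    congr 1
    rw [List.map_reverse, List.prod_reverse]
  have hTH : Tᴴ = T := by
    apply sub_eq_zero.mp
    apply hkill
    intro j
    rw [Matrix.sub_mulVec, hTHw, hTw]
    rcases hc01 j with h | h <;> rw [h] <;> simp
  have hTP : ∀ j, T * P j = c j • P j := by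
    intro j
    apply aux_mulVec_ext
    intro x
    rw [← Matrix.mulVec_mulVec, hPvec, Matrix.mulVec_smul, hTw, Matrix.smul_mulVec,
      hPvec, smul_smul, smul_smul, mul_comm]
  have hPT : ∀ j, P j * T = c j • P j := by
    intro j
    have h1 := congrArg Matrix.conjTranspose (hTP j)
    rw [Matrix.conjTranspose_mul, hTH, hPH, Matrix.conjTranspose_smul, hPH] at h1
    rw [h1]
    rcases hc01 j with h | h <;> rw [h] <;> simp
  have hQT : ∀ j, Q j * T = T * Q j := by
    intro j
    rw [hQdef]
    simp only
    rw [sub_mul, mul_sub, one_mul, mul_one, smul_mul_assoc, mul_smul_comm, hTP, hPT]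
  have hQ2 : ∀ j, Q j * Q j = 1 := by
    intro j
    rw [hQdef]
    simp only
    rw [sub_mul, one_mul, mul_sub, mul_one, smul_mul_assoc, mul_smul_comm, hP2 j, smul_smul]
    module
  -- the partial product B
  have hIT : ∀ j, Q j * T = (if μ j = μ0 then Q j else 1) * T := by
    intro j
    by_cases h : μ j = μ0
    · rw [if_pos h]
    · rw [if_neg h, one_mul, hQdef]
      simp only
      rw [sub_mul, one_mul, smul_mul_assoc, hPT, hcne j h, zero_smul, smul_zero, sub_zero]
  have hcommB : ∀ l : List (Fin (r+1)),
      ((l.map fun j => if μ j = μ0 then Q j else 1).prod) * T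
        = T * ((l.map fun j => if μ j = μ0 then Q j else 1).prod) := by
    intro l
    apply aux_prod_commute
    intro A hA
    obtain ⟨j, hj, rfl⟩ := List.mem_map.mp hA
    by_cases h : μ j = μ0
    · rw [if_pos h]; exact hQT j
    · rw [if_neg h, one_mul, mul_one]
  have hexch : ∀ l : List (Fin (r+1)),
      ((l.map Q).prod) * T = ((l.map fun j => if μ j = μ0 then Q j else 1).prod) * T := by
    intro l
    induction l with
    | nil => rfl
    | cons j l ih =>
      simp only [List.map_cons, List.prod_cons]
      rw [mul_assoc, ih, hcommB l, ← mul_assoc, hIT j, mul_assoc, ← hcommB l, ← mul_assoc]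
  set B : Matrix (Fin r) (Fin r) ℂ :=
    ((List.finRange (r+1)).map fun j => if μ j = μ0 then Q j else 1).prod with hB
  have hBT : B * T = s • T := by
    have h1 := hexch (List.finRange (r+1))
    rw [← List.ofFn_eq_map, hprodQ] at h1
    rw [← h1, smul_mul_assoc, one_mul]
  have hBT' : B * (1 - T) = 1 - T := by
    rw [hB]
    generalize List.finRange (r+1) = l
    induction l with
    | nil => simp
    | cons j l ih =>
      simp only [List.map_cons, List.prod_cons]
      rw [mul_assoc, ih]
      by_cases h : μ j = μ0
      · rw [if_pos h, hQdef]
        simp only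
        rw [sub_mul, one_mul, smul_mul_assoc, mul_sub, mul_one, hPT, hceq j h, one_smul,
          sub_self, smul_zero, sub_zero]
      · rw [if_neg h, one_mul]
  have hBeq : B = s • T + (1 - T) := by
    have h1 : B * (T + (1 - T)) = s • T + (1 - T) := by rw [mul_add, hBT, hBT']
    have h2 : T + (1 - T) = 1 := by abel
    rw [h2, mul_one] at h1
    exact h1
  have hdetB2 : B.det ^ 2 = 1 := by
    have h1 : B.det = (((List.finRange (r+1)).map fun j => if μ j = μ0 then Q j else 1).map
        Matrix.det).prod := by
      rw [hB, ← Matrix.coe_detMonoidHom, map_list_prod]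
    rw [h1]
    apply aux_prod_sq_one
    intro z hz
    obtain ⟨A, hA, rfl⟩ := List.mem_map.mp hz
    obtain ⟨j, hj, rfl⟩ := List.mem_map.mp hA
    rw [sq, ← Matrix.det_mul]
    by_cases h : μ j = μ0
    · rw [if_pos h, hQ2 j, Matrix.det_one]
    · rw [if_neg h, one_mul, Matrix.det_one]
  -- spectral theorem for T
  have hHerm : T.IsHermitian := hTH
  set V : Matrix (Fin r) (Fin r) ℂ := (hHerm.eigenvectorUnitary : Matrix (Fin r) (Fin r) ℂ)
    with hV
  have hVV : V * star V = 1 := Matrix.mem_unitaryGroup_iff.mp hHerm.eigenvectorUnitary.2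
  have hVV' : star V * V = 1 := Matrix.mem_unitaryGroup_iff'.mp hHerm.eigenvectorUnitary.2
  set D : Matrix (Fin r) (Fin r) ℂ := diagonal (RCLike.ofReal ∘ hHerm.eigenvalues) with hD
  have hspec : T = V * D * star V := hHerm.spectral_theorem
  have hcancel : ∀ X : Matrix (Fin r) (Fin r) ℂ, star V * (V * X * star V) * V = X := by
    intro X
    calc star V * (V * X * star V) * V = (star V * V) * X * (star V * V) := by
          simp only [mul_assoc]
      _ = X := by rw [hVV', one_mul, mul_one]
  have hD2 : D * D = D := by
    have h1 : V * D * star V * (V * D * star V) = V * D * star V := by rw [← hspec]; exact hT2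
    have h2 : V * (D * D) * star V = V * D * star V := by
      calc V * (D * D) * star V = V * D * ((star V * V) * D * star V) := by
            rw [hVV', one_mul]; simp only [mul_assoc]
        _ = V * D * star V * (V * D * star V) := by simp only [mul_assoc]
        _ = V * D * star V := h1
    have h3 := congrArg (fun X => star V * X * V) h2
    simpa only [hcancel] using h3
  have hev01 : ∀ i, hHerm.eigenvalues i = 0 ∨ hHerm.eigenvalues i = 1 := by
    intro i
    have h1 : ((hHerm.eigenvalues i : ℂ)) * (hHerm.eigenvalues i : ℂ)
        = (hHerm.eigenvalues i : ℂ) := by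
      have h2 : D * D = D := hD2
      rw [hD, Matrix.diagonal_mul_diagonal] at h2
      have h3 := congrFun (congrFun h2 i) i
      simpa [Matrix.diagonal_apply_eq] using h3
    have h2 : hHerm.eigenvalues i * hHerm.eigenvalues i = hHerm.eigenvalues i := by
      exact_mod_cast h1
    have h3 : hHerm.eigenvalues i * (hHerm.eigenvalues i - 1) = 0 := by
      rw [mul_sub, mul_one, h2, sub_self]
    rcases mul_eq_zero.mp h3 with h | h
    · exact Or.inl h
    · exact Or.inr (by linarith [sub_eq_zero.mp h])
  set d : ℕ := (Finset.univ.filter fun i => hHerm.eigenvalues i = 1).card with hd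
  have hdetB : B.det = s ^ d := by
    have hsD : V * (s • D + (1 - D)) * star V = s • (V * D * star V) + (1 - V * D * star V) := by
      rw [mul_add, add_mul, Matrix.mul_smul, Matrix.smul_mul, mul_sub, mul_one, sub_mul, hVV]
    rw [hBeq, hspec, ← hsD, Matrix.det_mul, Matrix.det_mul]
    have h1 : V.det * (s • D + (1 - D)).det * (star V).det
        = (s • D + (1 - D)).det * ((star V).det * V.det) := by ring
    rw [h1, ← Matrix.det_mul, hVV', Matrix.det_one, mul_one]
    have h2 : s • D + (1 - D) = diagonal (fun i => if hHerm.eigenvalues i = 1 then s else 1) := by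
      rw [hD]
      ext i k
      simp only [Matrix.add_apply, Matrix.smul_apply, Matrix.sub_apply, Matrix.one_apply,
        Matrix.diagonal_apply, Function.comp_apply, smul_eq_mul]
      by_cases hik : i = k
      · subst hik
        simp only [if_pos rfl]
        rcases hev01 i with h | h <;> rw [h] <;> norm_num
      · simp [hik]
    rw [h2, Matrix.det_diagonal, Finset.prod_ite, Finset.prod_const, Finset.prod_const_one,
      mul_one, hd]
  have hs2d : s ^ (2 * d) = 1 := by
    rw [mul_comm, pow_mul, ← hdetB, hdetB2]
  have hdr : r ∣ d := hdvd d hs2d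
  have hdle : d ≤ r := by
    rw [hd]
    have := Finset.card_filter_le (Finset.univ : Finset (Fin r)) (fun i => hHerm.eigenvalues i = 1)
    simpa using this
  have hdcase : d = 0 ∨ d = r := by
    rcases Nat.eq_zero_or_pos d with h | h
    · exact Or.inl h
    · exact Or.inr (le_antisymm hdle (Nat.le_of_dvd h hdr))
  rcases hdcase with hd0 | hdr'
  · -- T = 0, contradiction with T *ᵥ w 0 = w 0
    exfalso
    have hfe : (Finset.univ.filter fun i => hHerm.eigenvalues i = 1) = ∅ :=
      Finset.card_eq_zero.mp (by rw [← hd]; exact hd0)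
    have hev0 : ∀ i, hHerm.eigenvalues i = 0 := by
      intro i
      rcases hev01 i with h | h
      · exact h
      · exact absurd (Finset.mem_filter.mpr ⟨Finset.mem_univ i, h⟩) (by rw [hfe]; simp)
    have hD0 : D = 0 := by
      rw [hD]
      have : (RCLike.ofReal ∘ hHerm.eigenvalues : Fin r → ℂ) = fun _ => 0 := by
        funext i; simp [Function.comp_apply, hev0 i]
      rw [this]
      simp [Matrix.diagonal_zero]
    have hT0 : T = 0 := by rw [hspec, hD0, mul_zero, zero_mul]
    have h1 := hTw 0
    rw [hT0, Matrix.zero_mulVec, hc0, one_smul] at h1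
    exact hwne 0 h1.symm
  · -- T = 1, hence all μ j = μ0 and M is scalar
    have hfu : (Finset.univ.filter fun i => hHerm.eigenvalues i = 1) = Finset.univ := by
      apply Finset.eq_univ_of_card
      rw [← hd, hdr']
      simp
    have hev1 : ∀ i, hHerm.eigenvalues i = 1 := by
      intro i
      have : i ∈ Finset.univ.filter fun i => hHerm.eigenvalues i = 1 := by
        rw [hfu]; exact Finset.mem_univ i
      exact (Finset.mem_filter.mp this).2
    have hD1 : D = 1 := by
      rw [hD]
      have : (RCLike.ofReal ∘ hHerm.eigenvalues : Fin r → ℂ) = fun _ => 1 := by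
        funext i; simp [Function.comp_apply, hev1 i]
      rw [this]
      exact Matrix.diagonal_one
    have hT1 : T = 1 := by rw [hspec, hD1, mul_one, hVV]
    have hμall : ∀ j, μ j = μ0 := by
      intro j
      by_contra h
      have h1 := hTw j
      rw [hT1, Matrix.one_mulVec, hcne j h, zero_smul] at h1
      exact hwne j h1
    have hM0 : M = μ0 • 1 := by
      apply sub_eq_zero.mp
      apply hkill
      intro j
      rw [Matrix.sub_mulVec, hMw j, hμall j, Matrix.smul_mulVec, Matrix.one_mulVec,
        sub_self]
    refine ⟨μ0, ?_, hM0⟩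
    have h1 := hMdet
    rw [hM0, Matrix.det_smul, Matrix.det_one, mul_one, Fintype.card_fin] at h1
    exact h1


/-- The diagonal matrix `diag(e^{iπ(r−1)/r}, e^{−iπ/r}, …, e^{−iπ/r})` representing the
conjugacy class labeled by `μ = ((r−1)/(2r), −1/(2r), …, −1/(2r))`. -/
noncomputable def Dmu (r : ℕ) : Matrix (Fin r) (Fin r) ℂ :=
  Matrix.diagonal fun i =>
    if (i : ℕ) = 0 then Complex.exp ((Real.pi : ℂ) * ((r : ℂ) - 1) / (r : ℂ) * Complex.I)
    else Complex.exp (-((Real.pi : ℂ) / (r : ℂ)) * Complex.I)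

/-- The conjugacy class `C_μ ⊂ SU(r)` of the matrix `Dmu r`. -/
def Cmu (r : ℕ) : Set (Matrix (Fin r) (Fin r) ℂ) :=
  {X | ∃ M ∈ specialUnitaryGroup (Fin r) ℂ, M * Dmu r * M⁻¹ = X}

/-- The set `R = {(C₁, …, C_{r+1}) ∈ C_μ^{r+1} : C₁⋯C_{r+1} = 1}`. -/
def Rset (r : ℕ) : Set (Fin (r + 1) → Matrix (Fin r) (Fin r) ℂ) :=
  {C | (∀ j, C j ∈ Cmu r) ∧ (List.ofFn C).prod = 1}

/-- For `r ≥ 2`, the stabilizer of any point of `R` under the simultaneous conjugation action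
of `SU(r)` is the center of `SU(r)`: any `M ∈ SU(r)` commuting with every `Cⱼ` is a scalar
matrix `c • I` with `c^r = 1`. -/
theorem stabilizer_in_R_is_center (r : ℕ) (hr : 2 ≤ r)
    (C : Fin (r + 1) → Matrix (Fin r) (Fin r) ℂ) (hC : C ∈ Rset r)
    (M : Matrix (Fin r) (Fin r) ℂ) (hM : M ∈ specialUnitaryGroup (Fin r) ℂ)
    (hcomm : ∀ j, M * C j = C j * M) :
    ∃ c : ℂ, c ^ r = 1 ∧ M = c • (1 : Matrix (Fin r) (Fin r) ℂ) := by
  obtain ⟨hCmu, hprod1⟩ := hC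
  choose U hUmem hUC using hCmu
  have hr0 : 0 < r := by omega
  set z : Fin r := ⟨0, hr0⟩ with hz
  have hrC : (r : ℂ) ≠ 0 := Nat.cast_ne_zero.mpr (by omega)
  -- unitary facts
  have hUu : ∀ j, star (U j) * U j = 1 := fun j =>
    Matrix.mem_unitaryGroup_iff'.mp (Matrix.mem_specialUnitaryGroup_iff.mp (hUmem j)).1
  have hUu' : ∀ j, U j * star (U j) = 1 := fun j =>
    Matrix.mem_unitaryGroup_iff.mp (Matrix.mem_specialUnitaryGroup_iff.mp (hUmem j)).1
  have hUinv : ∀ j, (U j)⁻¹ = star (U j) := fun j => Matrix.inv_eq_left_inv (hUu j)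
  have hMu : Mᴴ * M = 1 := by
    rw [← Matrix.star_eq_conjTranspose]
    exact Matrix.mem_unitaryGroup_iff'.mp (Matrix.mem_specialUnitaryGroup_iff.mp hM).1
  have hMdet : M.det = 1 := (Matrix.mem_specialUnitaryGroup_iff.mp hM).2
  -- the vectors w
  set w : Fin (r+1) → Fin r → ℂ := fun j i => U j i z with hw
  set ζ : ℂ := Complex.exp (-((Real.pi : ℂ) / (r : ℂ)) * Complex.I) with hζ
  have hζ0 : ζ ≠ 0 := Complex.exp_ne_zero _
  set E : Matrix (Fin r) (Fin r) ℂ := diagonal (fun i : Fin r => if (i : ℕ) = 0 then 1 else 0)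
    with hE
  have hDmu : Dmu r = ζ • ((1 : Matrix (Fin r) (Fin r) ℂ) - (2:ℂ) • E) := by
    rw [Dmu, hE, hζ]
    ext i k
    by_cases hik : i = k
    · subst hik
      simp only [Matrix.diagonal_apply_eq, Matrix.smul_apply, Matrix.sub_apply,
        Matrix.one_apply_eq, smul_eq_mul]
      by_cases h0 : (i : ℕ) = 0
      · rw [if_pos h0, if_pos h0]
        have harg : (Real.pi : ℂ) * ((r : ℂ) - 1) / (r : ℂ) * Complex.I
            = (Real.pi : ℂ) * Complex.I + -((Real.pi : ℂ) / (r : ℂ)) * Complex.I := by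
          field_simp
          ring
        rw [harg, Complex.exp_add, Complex.exp_pi_mul_I]
        ring
      · rw [if_neg h0, if_neg h0]
        ring
    · simp [Matrix.diagonal_apply_ne _ hik, Matrix.one_apply_ne hik]
  -- rank one projections
  have hUEU : ∀ j, U j * E * star (U j) = vecMulVec (w j) (star (w j)) := by
    intro j
    ext a b
    rw [Matrix.mul_apply]
    rw [Finset.sum_eq_single z (fun k _ hk => ?_) (fun h => absurd (Finset.mem_univ z) h)]
    · rw [hE, Matrix.mul_diagonal]
      simp [hz, Matrix.star_apply, Matrix.vecMulVec_apply, hw, Pi.star_apply]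
    · rw [hE, Matrix.mul_diagonal]
      have hk0 : ¬ ((k : ℕ) = 0) := fun h => hk (Fin.ext (by rw [h]))
      rw [if_neg hk0, mul_zero, zero_mul]
  have hQform : ∀ j, C j = ζ • ((1 : Matrix (Fin r) (Fin r) ℂ)
      - (2:ℂ) • vecMulVec (w j) (star (w j))) := by
    intro j
    rw [← hUC j, hUinv j, hDmu, Matrix.mul_smul, Matrix.smul_mul]
    congr 1
    rw [mul_sub, sub_mul, mul_one, hUu' j, Matrix.mul_smul, Matrix.smul_mul,
      hUEU j]
  -- norms
  have hnorm : ∀ j, star (w j) ⬝ᵥ w j = 1 := by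
    intro j
    have h1 := congrFun (congrFun (hUu j) z) z
    rw [Matrix.mul_apply, Matrix.one_apply_eq] at h1
    rw [← h1]
    apply Finset.sum_congr rfl
    intro k _
    simp [Matrix.star_apply, hw, dotProduct]
  -- commutation
  have hMP : ∀ j, M * vecMulVec (w j) (star (w j)) = vecMulVec (w j) (star (w j)) * M := by
    intro j
    have h1 := hcomm j
    rw [hQform j, Matrix.mul_smul, Matrix.smul_mul] at h1
    have h2 := smul_right_injective (Matrix (Fin r) (Fin r) ℂ) hζ0 h1
    rw [mul_sub, sub_mul, mul_one, one_mul, Matrix.mul_smul, Matrix.smul_mul] at h2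
    have h3 := sub_right_injective h2
    exact smul_right_injective (Matrix (Fin r) (Fin r) ℂ) two_ne_zero h3
  -- the product condition
  set s : ℂ := Complex.exp (((r : ℂ) + 1) * ((Real.pi : ℂ) / (r : ℂ)) * Complex.I) with hs
  have hprodQ : (List.ofFn fun j => (1 : Matrix (Fin r) (Fin r) ℂ)
      - (2:ℂ) • vecMulVec (w j) (star (w j))).prod = s • 1 := by
    have h1 : List.ofFn C = ((List.ofFn fun j => (1 : Matrix (Fin r) (Fin r) ℂ)
        - (2:ℂ) • vecMulVec (w j) (star (w j))).map fun A => ζ • A) := by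
      rw [List.map_ofFn]
      congr 1
      funext j
      exact hQform j
    rw [h1, aux_smul_list_prod, List.length_ofFn] at hprod1
    have hζp : ζ ^ (r+1) ≠ 0 := pow_ne_zero _ hζ0
    have h2 : (List.ofFn fun j => (1 : Matrix (Fin r) (Fin r) ℂ)
        - (2:ℂ) • vecMulVec (w j) (star (w j))).prod = (ζ ^ (r+1))⁻¹ • 1 := by
      have h3 := congrArg (fun X => (ζ ^ (r+1))⁻¹ • X) hprod1
      rw [smul_smul, inv_mul_cancel₀ hζp, one_smul] at h3
      rw [h3]
    rw [h2]
    congr 1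
    rw [hζ, ← Complex.exp_nat_mul, ← Complex.exp_neg]
    congr 1
    push_cast
    ring
  exact aux_core hr M hMu hMdet s hs w hnorm hMP hprodQ
end
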